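/- The map S defined by (S f)(x,y,r) = (e^{2λr})ⁿ ē[η_λ(r) β(x,y)] f(−e^{λr}x, −e^{λr}y, −r) is anti-multiplicative for the twisted convolution product: S(f × g) = S(g) × S(f) for all f, g ∈ 𝒜. -/

import Mathlib

open MeasureTheory
noncomputable section

/-- ℝⁿ -/
abbrev Rn (n : ℕ) := Fin n → ℝ

/-- η_λ(r) = (e^{2λr} − 1)/(2λ) -/
def eta (l r : ℝ) : ℝ := (Real.exp (2 * l * r) - 1) / (2 * l)

/-- ē(t) = e^{−2πit} -/
def ebar (t : ℝ) : ℂ := Complex.exp (-2 * Real.pi * t * Complex.I)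

/-- standard inner product β on ℝⁿ -/
def beta {n : ℕ} (x y : Rn n) : ℝ := ∑ i, x i * y i

/-- membership in 𝒜: Schwartz in (x,y,r), compactly supported in r -/
def IsA {n : ℕ} (f : Rn n → Rn n → ℝ → ℂ) : Prop :=
  (∃ F : SchwartzMap ((Rn n × Rn n) × ℝ) ℂ, ∀ x y r, f x y r = F ((x, y), r)) ∧
  (∃ C : ℝ, ∀ x y r, f x y r ≠ 0 → |r| ≤ C)

/-- twisted convolution product -/
def tMul {n : ℕ} (l : ℝ) (f g : Rn n → Rn n → ℝ → ℂ) : Rn n → Rn n → ℝ → ℂ :=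
  fun x y r => ∫ xt : Rn n, ∫ yt : Rn n,
    f xt yt r * g (x - xt) (y - yt) r * ebar (eta l r * beta xt (y - yt))

/-- twisted involution -/
def tStar {n : ℕ} (l : ℝ) (f : Rn n → Rn n → ℝ → ℂ) : Rn n → Rn n → ℝ → ℂ :=
  fun x y r => (starRingEnd ℂ) (f (-x) (-y) r) * ebar (eta l r * beta x y)

/-- φ(f) = ∫ f(0,0,r) dr -/
def PhiF {n : ℕ} (f : Rn n → Rn n → ℝ → ℂ) : ℂ := ∫ r : ℝ, f 0 0 r

/-- continuous with compact support (as a function of all variables) -/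
def CC {n : ℕ} (ξ : Rn n → Rn n → ℝ → ℂ) : Prop :=
  Continuous (fun p : (Rn n × Rn n) × ℝ => ξ p.1.1 p.1.2 p.2) ∧
  HasCompactSupport (fun p : (Rn n × Rn n) × ℝ => ξ p.1.1 p.1.2 p.2)

/-- L² inner product ⟨f,g⟩ (linear in the first variable, conjugate in the second) -/
def ip {n : ℕ} (f g : Rn n → Rn n → ℝ → ℂ) : ℂ :=
  ∫ x : Rn n, ∫ y : Rn n, ∫ r : ℝ, f x y r * (starRingEnd ℂ) (g x y r)

/-- the regular representation L_f ξ (same integral formula as the twisted product) -/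
def Lop {n : ℕ} (l : ℝ) (f ξ : Rn n → Rn n → ℝ → ℂ) : Rn n → Rn n → ℝ → ℂ :=
  tMul l f ξ

/-- the antipode S on 𝒜 -/
def Smap {n : ℕ} (l : ℝ) (f : Rn n → Rn n → ℝ → ℂ) : Rn n → Rn n → ℝ → ℂ :=
  fun x y r => (((Real.exp (2 * l * r)) ^ n : ℝ) : ℂ) * ebar (eta l r * beta x y) *
    f (-(Real.exp (l * r) • x)) (-(Real.exp (l * r) • y)) (-r)

-- auxiliary lemmas
lemma ebar_mul (s t : ℝ) : ebar s * ebar t = ebar (s + t) := by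
  simp only [ebar, ← Complex.exp_add]
  congr 1
  push_cast
  ring

lemma beta_add_left {n : ℕ} (x x' y : Rn n) : beta (x + x') y = beta x y + beta x' y := by
  simp [beta, add_mul, Finset.sum_add_distrib]

lemma beta_smul_left {n : ℕ} (c : ℝ) (x y : Rn n) : beta (c • x) y = c * beta x y := by
  simp [beta, Finset.mul_sum, mul_assoc]

lemma beta_neg_left {n : ℕ} (x y : Rn n) : beta (-x) y = - beta x y := by
  simp [beta]

lemma beta_add_right {n : ℕ} (x y y' : Rn n) : beta x (y + y') = beta x y + beta x y' := by
  simp [beta, mul_add, Finset.sum_add_distrib]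

lemma beta_smul_right {n : ℕ} (c : ℝ) (x y : Rn n) : beta x (c • y) = c * beta x y := by
  simp only [beta, Pi.smul_apply, smul_eq_mul, Finset.mul_sum]
  exact Finset.sum_congr rfl fun i _ => by ring

lemma beta_neg_right {n : ℕ} (x y : Rn n) : beta x (-y) = - beta x y := by
  simp [beta]

lemma beta_sub_left {n : ℕ} (x x' y : Rn n) : beta (x - x') y = beta x y - beta x' y := by
  rw [sub_eq_add_neg, beta_add_left, ← neg_one_smul ℝ x', beta_smul_left]; ring

lemma beta_sub_right {n : ℕ} (x y y' : Rn n) : beta x (y - y') = beta x y - beta x y' := by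
  rw [sub_eq_add_neg, beta_add_right, ← neg_one_smul ℝ y', beta_smul_right]; ring

lemma eta_neg (l r : ℝ) : eta l (-r) = -((Real.exp (l*r))^2)⁻¹ * eta l r := by
  have hsq : (Real.exp (l*r))^2 = Real.exp (2*l*r) := by
    rw [sq, ← Real.exp_add]; ring_nf
  have h : Real.exp (2*l*(-r)) = ((Real.exp (l*r))^2)⁻¹ := by
    rw [hsq, ← Real.exp_neg]; congr 1; ring
  have h2 : (Real.exp (2*l*r)) ≠ 0 := (Real.exp_pos _).ne'
  simp only [eta, h, hsq]
  field_simp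
  ring

lemma int_shift_scale {n : ℕ} (φ : Rn n → ℂ) (a : Rn n) (c : ℝ) (hc : 0 < c) :
    ∫ u : Rn n, φ u = (c ^ n : ℝ) • ∫ u : Rn n, φ (a + c • u) := by
  have h1 : ∫ u : Rn n, (fun w => φ (a + w)) (c • u) =
      |(c ^ Module.finrank ℝ (Rn n))⁻¹| • ∫ w : Rn n, φ (a + w) :=
    Measure.integral_comp_smul volume (fun w => φ (a + w)) c
  simp only [integral_add_left_eq_self] at h1
  rw [h1, Module.finrank_fintype_fun_eq_card, Fintype.card_fin, smul_smul,
    abs_of_pos (by positivity), mul_inv_cancel₀ (by positivity), one_smul]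

/-- S is anti-multiplicative: S(f × g) = S(g) × S(f) -/
theorem Smap_antimul {n : ℕ} (l : ℝ) (f g : Rn n → Rn n → ℝ → ℂ)
    (hf : IsA f) (hg : IsA g) :
    Smap l (tMul l f g) = tMul l (Smap l g) (Smap l f) := by
  funext x y r
  simp only [Smap, tMul]
  have hapos := Real.exp_pos (l*r)
  have hc : (0:ℝ) < (Real.exp (l*r))⁻¹ := inv_pos.2 hapos
  have step : ∀ (Φ : Rn n → Rn n → ℂ), (∫ xt : Rn n, ∫ yt : Rn n, Φ xt yt) =
      (((Real.exp (l*r))⁻¹^n * (Real.exp (l*r))⁻¹^n : ℝ)) •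
        ∫ xt : Rn n, ∫ yt : Rn n, Φ (x + (Real.exp (l*r))⁻¹ • xt) (y + (Real.exp (l*r))⁻¹ • yt) := by
    intro Φ
    rw [int_shift_scale (fun xt => ∫ yt, Φ xt yt) x _ hc]
    have h2 : ∀ u : Rn n, (∫ yt : Rn n, Φ u yt) =
        (((Real.exp (l*r))⁻¹^n : ℝ)) • ∫ yt : Rn n, Φ u (y + (Real.exp (l*r))⁻¹ • yt) :=
      fun u => int_shift_scale _ y _ hc
    simp only [h2, integral_smul, smul_smul]
  conv_rhs => rw [step]
  have hne : Real.exp (l*r) ≠ 0 := hapos.ne'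
  have h1 : ∀ v u : Rn n, -(Real.exp (l*r) • (v + (Real.exp (l*r))⁻¹ • u))
      = -(Real.exp (l*r) • v) - u := by
    intro v u
    rw [smul_add, smul_smul, mul_inv_cancel₀ hne, one_smul, neg_add']
  have h2 : ∀ v u : Rn n, v - (v + (Real.exp (l*r))⁻¹ • u) = -((Real.exp (l*r))⁻¹ • u) := by
    intro v u; abel
  have h3 : ∀ u : Rn n, -(Real.exp (l*r) • -((Real.exp (l*r))⁻¹ • u)) = u := by
    intro u
    rw [smul_neg, neg_neg, smul_smul, mul_inv_cancel₀ hne, one_smul]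
  simp only [h1, h2, h3, Complex.real_smul]
  rw [← integral_const_mul, ← integral_const_mul]
  congr 1
  funext xt
  rw [← integral_const_mul, ← integral_const_mul]
  congr 1
  funext yt
  have hexp2 : Real.exp (2*l*r) = Real.exp (l*r) * Real.exp (l*r) := by
    rw [← Real.exp_add]; ring_nf
  have hC : (Real.exp (2*l*r) : ℝ)^n =
      ((Real.exp (l*r))⁻¹^n * (Real.exp (l*r))⁻¹^n) * (Real.exp (2*l*r)^n * Real.exp (2*l*r)^n) := by
    rw [hexp2]; field_simp; ring_nf; rw [← mul_pow, mul_inv_cancel₀ hne, one_pow]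
  have hS : eta l r * beta x y + eta l (-r) * beta xt (-(Real.exp (l*r) • y) - yt) =
      eta l r * beta (x + (Real.exp (l*r))⁻¹ • xt) (y + (Real.exp (l*r))⁻¹ • yt) +
      (eta l r * beta (-((Real.exp (l*r))⁻¹ • xt)) (-((Real.exp (l*r))⁻¹ • yt)) +
       eta l r * beta (x + (Real.exp (l*r))⁻¹ • xt) (-((Real.exp (l*r))⁻¹ • yt))) := by
    rw [eta_neg]
    simp only [beta_add_left, beta_add_right, beta_sub_right, beta_neg_left, beta_neg_right,
      beta_smul_left, beta_smul_right]
    field_simp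
    ring
  calc ↑(Real.exp (2 * l * r) ^ n) * ebar (eta l r * beta x y) *
      (f xt yt (-r) * g (-(Real.exp (l * r) • x) - xt) (-(Real.exp (l * r) • y) - yt) (-r) *
        ebar (eta l (-r) * beta xt (-(Real.exp (l * r) • y) - yt)))
      = ↑(Real.exp (2 * l * r) ^ n) *
          (f xt yt (-r) * g (-(Real.exp (l * r) • x) - xt) (-(Real.exp (l * r) • y) - yt) (-r)) *
          ebar (eta l r * beta x y + eta l (-r) * beta xt (-(Real.exp (l * r) • y) - yt)) := by
        rw [← ebar_mul]; ring
    _ = ↑(((Real.exp (l * r))⁻¹ ^ n * (Real.exp (l * r))⁻¹ ^ n) *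
          (Real.exp (2*l*r)^n * Real.exp (2*l*r)^n)) *
          (f xt yt (-r) * g (-(Real.exp (l * r) • x) - xt) (-(Real.exp (l * r) • y) - yt) (-r)) *
          (ebar (eta l r * beta (x + (Real.exp (l*r))⁻¹ • xt) (y + (Real.exp (l*r))⁻¹ • yt)) *
           (ebar (eta l r * beta (-((Real.exp (l*r))⁻¹ • xt)) (-((Real.exp (l*r))⁻¹ • yt))) *
            ebar (eta l r * beta (x + (Real.exp (l*r))⁻¹ • xt) (-((Real.exp (l*r))⁻¹ • yt))))) := by
        rw [hS, ← hC, ebar_mul, ebar_mul]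
    _ = _ := by push_cast; ring
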